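/- Let v : ℝ^d → ℝ^d be a mapping satisfying |v(x)| ≤ C|x| for all x ∈ ℝ^d and some constant C. Let s ≥ 0. Then for every tempered distribution f on ℝ^d whose Fourier transform is supported in a ball B(η₀, 1) for some η₀ ∈ ℝ^d (and which is given by a continuous function), one has sup_{x ∈ ℝ^d} ⟨x⟩^{−s} |f(v(x))| ≲ ∫_{ℝ^d} ⟨x⟩^{−s} |f(x)| dx, with implicit constant independent of f and η₀. -/

import Mathlib

open MeasureTheory FourierTransform Metric
open scoped ENNReal

section BernsteinAux

open SchwartzMap Complex Function
open scoped RealInnerProductSpace Real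


variable {d : ℕ}

/-- A complex-valued Schwartz cutoff equal to `1` on the unit ball. -/
lemma exists_schwartz_cutoff (d : ℕ) :
    ∃ ψ : SchwartzMap (EuclideanSpace ℝ (Fin d)) ℂ,
      ∀ t : EuclideanSpace ℝ (Fin d), ‖t‖ < 1 → ψ t = 1 := by
  let b : ContDiffBump (0 : EuclideanSpace ℝ (Fin d)) := ⟨1, 2, one_pos, one_lt_two⟩
  have hsmooth : ContDiff ℝ ((⊤ : ℕ∞)) (fun x : EuclideanSpace ℝ (Fin d) => (b x : ℂ)) :=
    Complex.ofRealCLM.contDiff.comp (b.contDiff (n := (⊤ : ℕ∞)))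
  have hcs : HasCompactSupport (fun x : EuclideanSpace ℝ (Fin d) => (b x : ℂ)) :=
    b.hasCompactSupport.comp_left (g := fun r : ℝ => (r : ℂ)) (by simp)
  refine ⟨⟨fun x => (b x : ℂ), hsmooth, ?_⟩, ?_⟩
  · intro k n
    have h1 : HasCompactSupport
        (fun x : EuclideanSpace ℝ (Fin d) =>
          ‖x‖ ^ k * ‖iteratedFDeriv ℝ n (fun x => (b x : ℂ)) x‖) := by
      apply HasCompactSupport.mono (hcs.iteratedFDeriv (𝕜 := ℝ) n)
      intro x hx
      simp only [Function.mem_support, ne_eq] at hx ⊢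
      exact fun h => hx (by simp [h])
    have h2 : Continuous
        (fun x : EuclideanSpace ℝ (Fin d) =>
          ‖x‖ ^ k * ‖iteratedFDeriv ℝ n (fun x => (b x : ℂ)) x‖) :=
      ((continuous_norm).pow k).mul
        ((hsmooth.continuous_iteratedFDeriv (by exact_mod_cast le_top)).norm)
    obtain ⟨Cb, hCb⟩ := h1.exists_bound_of_continuous h2
    exact ⟨Cb, fun x => by simpa using hCb x⟩
  · intro t ht
    have h1 : b t = 1 := b.one_of_mem_closedBall (by simpa [mem_closedBall, dist_eq_norm] using ht.le)
    show ((b t : ℝ) : ℂ) = 1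
    rw [h1]; norm_num


lemma schwartz_poly_bound {d : ℕ} (g : SchwartzMap (EuclideanSpace ℝ (Fin d)) ℂ)
    (s : ℝ) (hs : 0 ≤ s) :
    ∃ K : ℝ, 0 ≤ K ∧ ∀ t : EuclideanSpace ℝ (Fin d),
      (1 + ‖t‖ ^ 2) ^ (s / 2) * ‖g t‖ ≤ K := by
  set k : ℕ := ⌈s⌉₊ with hk
  refine ⟨2 ^ k * (Finset.Iic (k, 0)).sup (fun m => SchwartzMap.seminorm ℝ m.1 m.2) g, by positivity, ?_⟩
  intro t
  have h0 : (0:ℝ) ≤ 1 + ‖t‖ ^ 2 := by positivity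
  have h1 : (1 + ‖t‖ ^ 2) ^ (s / 2) ≤ (1 + ‖t‖) ^ (k : ℕ) := by
    have e1 : (1 + ‖t‖ ^ 2) ^ (s / 2) ≤ ((1 + ‖t‖) ^ (2:ℕ)) ^ (s / 2) := by
      apply Real.rpow_le_rpow h0 _ (by positivity)
      have := norm_nonneg t
      nlinarith
    have e2 : ((1 + ‖t‖) ^ (2:ℕ) : ℝ) ^ (s / 2) = (1 + ‖t‖) ^ s := by
      rw [← Real.rpow_natCast (1 + ‖t‖) 2, ← Real.rpow_mul (by positivity)]
      congr 1; ring
    have e3 : (1 + ‖t‖ : ℝ) ^ s ≤ (1 + ‖t‖) ^ (k : ℝ) :=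
      Real.rpow_le_rpow_of_exponent_le (by simp [norm_nonneg]) (Nat.le_ceil s)
    calc (1 + ‖t‖ ^ 2) ^ (s / 2) ≤ ((1 + ‖t‖) ^ (2:ℕ)) ^ (s / 2) := e1
      _ = (1 + ‖t‖) ^ s := e2
      _ ≤ (1 + ‖t‖) ^ (k : ℝ) := e3
      _ = (1 + ‖t‖) ^ (k : ℕ) := Real.rpow_natCast _ k
  have h2 := SchwartzMap.one_add_le_sup_seminorm_apply (𝕜 := ℝ) (m := (k, 0))
      le_rfl le_rfl g t
  rw [norm_iteratedFDeriv_zero] at h2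
  calc (1 + ‖t‖ ^ 2) ^ (s / 2) * ‖g t‖ ≤ (1 + ‖t‖) ^ (k:ℕ) * ‖g t‖ := by
        apply mul_le_mul_of_nonneg_right h1 (norm_nonneg _)
    _ ≤ _ := h2

lemma peetre_aux {d : ℕ} (s : ℝ) (hs : 0 ≤ s) (a b : EuclideanSpace ℝ (Fin d)) :
    (1 + ‖a‖ ^ 2) ^ (s / 2) ≤
      2 ^ (s / 2) * ((1 + ‖a - b‖ ^ 2) ^ (s / 2) * (1 + ‖b‖ ^ 2) ^ (s / 2)) := by
  have h1 : ‖a‖ ≤ ‖a - b‖ + ‖b‖ := by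
    calc ‖a‖ = ‖a - b + b‖ := by rw [sub_add_cancel]
      _ ≤ ‖a - b‖ + ‖b‖ := norm_add_le _ _
  have base : (1 + ‖a‖ ^ 2 : ℝ) ≤ 2 * ((1 + ‖a - b‖ ^ 2) * (1 + ‖b‖ ^ 2)) := by
    have h2 := norm_nonneg a; have h3 := norm_nonneg (a - b); have h4 := norm_nonneg b
    nlinarith [sq_nonneg (‖a - b‖ - ‖b‖), sq_nonneg (‖a-b‖*‖b‖)]
  calc (1 + ‖a‖ ^ 2) ^ (s / 2) ≤ (2 * ((1 + ‖a - b‖ ^ 2) * (1 + ‖b‖ ^ 2))) ^ (s / 2) :=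
        Real.rpow_le_rpow (by positivity) base (by positivity)
    _ = 2 ^ (s / 2) * ((1 + ‖a - b‖ ^ 2) ^ (s / 2) * (1 + ‖b‖ ^ 2) ^ (s / 2)) := by
        rw [Real.mul_rpow (by norm_num) (by positivity),
          Real.mul_rpow (by positivity) (by positivity)]


lemma kernel_bound {d : ℕ} (ψ : SchwartzMap (EuclideanSpace ℝ (Fin d)) ℂ)
    (hψ : ∀ t : EuclideanSpace ℝ (Fin d), ‖t‖ < 1 → ψ t = 1)
    (f : EuclideanSpace ℝ (Fin d) → ℂ) (η₀ : EuclideanSpace ℝ (Fin d))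
    (hc : Continuous f) (hi : Integrable f)
    (hsupp : Function.support (𝓕 f) ⊆ ball η₀ 1) (z : EuclideanSpace ℝ (Fin d)) :
    ‖f z‖ ≤ ∫ y : EuclideanSpace ℝ (Fin d), ‖f y‖ * ‖𝓕⁻ (⇑ψ) (z - y)‖ := by
  -- continuity and integrability of 𝓕 f
  have hFc : Continuous (𝓕 f) := by
    apply VectorFourier.fourierIntegral_continuous Real.continuous_fourierChar _ hi
    exact continuous_inner
  have hFcs : HasCompactSupport (𝓕 f) := by
    apply HasCompactSupport.intro (isCompact_closedBall η₀ 1)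
    intro x hx
    by_contra h
    exact hx (ball_subset_closedBall (hsupp h))
  have hFi : Integrable (𝓕 f) := hFc.integrable_of_hasCompactSupport hFcs
  have hinv : 𝓕⁻ (𝓕 f) z = f z := hi.fourierInv_fourier_eq hFi hc.continuousAt
  -- step A : f z as a single integral with the cutoff inserted
  have stepA : f z = ∫ ω, Complex.exp ((2 * π * ⟪ω, z⟫ : ℝ) * Complex.I) *
      (ψ (ω - η₀) * 𝓕 f ω) := by
    rw [← hinv, Real.fourierInv_eq']
    congr 1
    ext ω
    rw [smul_eq_mul]
    by_cases h : 𝓕 f ω = 0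
    · rw [h]; ring
    · have hω : ψ (ω - η₀) = 1 := by
        apply hψ
        have := hsupp h
        simpa [mem_ball, dist_eq_norm] using this
      rw [hω]; ring
  -- the double integrand
  set F : EuclideanSpace ℝ (Fin d) → EuclideanSpace ℝ (Fin d) → ℂ :=
    fun ω y => Complex.exp ((2 * π * ⟪ω, z⟫ : ℝ) * Complex.I) *
      (ψ (ω - η₀) * (Complex.exp ((-2 * π * ⟪y, ω⟫ : ℝ) * Complex.I) * f y)) with hF
  have hFmeas : Continuous (uncurry F) := by
    apply Continuous.mul
    · exact Complex.continuous_exp.comp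
        ((Complex.continuous_ofReal.comp
          (continuous_const.mul (continuous_inner.comp
            (continuous_fst.prodMk continuous_const)))).mul continuous_const)
    apply Continuous.mul
    · exact ψ.continuous.comp (continuous_fst.sub continuous_const)
    apply Continuous.mul
    · exact Complex.continuous_exp.comp
        ((Complex.continuous_ofReal.comp
          (continuous_const.mul (continuous_inner.comp
            (continuous_snd.prodMk continuous_fst)))).mul continuous_const)
    · exact hc.comp continuous_snd
  have hFint : Integrable (uncurry F) ((volume : Measure (EuclideanSpace ℝ (Fin d))).prod volume) := by
    have hdom : Integrable (fun p : EuclideanSpace ℝ (Fin d) × EuclideanSpace ℝ (Fin d) =>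
        ‖ψ (p.1 - η₀)‖ * ‖f p.2‖) ((volume : Measure (EuclideanSpace ℝ (Fin d))).prod volume) :=
      Integrable.mul_prod ((ψ.integrable.comp_sub_right η₀).norm) hi.norm
    apply hdom.mono' hFmeas.aestronglyMeasurable
    filter_upwards with p
    simp only [uncurry, hF, norm_mul, Complex.norm_exp_ofReal_mul_I, one_mul]
    exact le_refl _
  -- step B : Fubini
  have stepB : f z = ∫ y, ∫ ω, F ω y := by
    rw [stepA, ← MeasureTheory.integral_integral_swap hFint]
    congr 1
    ext ω
    rw [Real.fourier_eq']
    simp_rw [smul_eq_mul, hF]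
    rw [← MeasureTheory.integral_const_mul, ← MeasureTheory.integral_const_mul]
  -- compute the inner integral
  have inner_eq : ∀ y, ∫ ω, F ω y =
      (𝓕⁻ (⇑ψ) (z - y) * Complex.exp ((2 * π * ⟪η₀, z - y⟫ : ℝ) * Complex.I)) * f y := by
    intro y
    have e1 : ∀ ω : EuclideanSpace ℝ (Fin d), F ω y =
        (ψ (ω - η₀) * Complex.exp ((2 * π * ⟪ω, z - y⟫ : ℝ) * Complex.I)) * f y := by
      intro ω
      have harg : (2 * π * ⟪ω, z - y⟫ : ℝ) = 2 * π * ⟪ω, z⟫ + (-2) * π * ⟪y, ω⟫ := by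
        rw [inner_sub_right, real_inner_comm y ω]; ring
      rw [hF]
      simp only []
      rw [harg, Complex.ofReal_add, add_mul, Complex.exp_add]
      ring
    calc ∫ ω, F ω y
        = ∫ ω, (ψ (ω - η₀) * Complex.exp ((2 * π * ⟪ω, z - y⟫ : ℝ) * Complex.I)) * f y := by
          simp_rw [e1]
      _ = (∫ ω, ψ (ω - η₀) * Complex.exp ((2 * π * ⟪ω, z - y⟫ : ℝ) * Complex.I)) * f y :=
          MeasureTheory.integral_mul_const _ _
      _ = (𝓕⁻ (⇑ψ) (z - y) * Complex.exp ((2 * π * ⟪η₀, z - y⟫ : ℝ) * Complex.I)) * f y := by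
          congr 1
          have e2 : ∫ ω, ψ (ω - η₀) * Complex.exp ((2 * π * ⟪ω, z - y⟫ : ℝ) * Complex.I)
              = ∫ u, ψ u * Complex.exp ((2 * π * ⟪u + η₀, z - y⟫ : ℝ) * Complex.I) := by
            rw [← MeasureTheory.integral_add_right_eq_self
              (fun ω => ψ (ω - η₀) * Complex.exp ((2 * π * ⟪ω, z - y⟫ : ℝ) * Complex.I)) η₀]
            simp [add_sub_cancel_right]
          rw [e2]
          have e3 : ∀ u : EuclideanSpace ℝ (Fin d),
              ψ u * Complex.exp ((2 * π * ⟪u + η₀, z - y⟫ : ℝ) * Complex.I) =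
              (Complex.exp ((2 * π * ⟪u, z - y⟫ : ℝ) * Complex.I) * ψ u) *
                Complex.exp ((2 * π * ⟪η₀, z - y⟫ : ℝ) * Complex.I) := by
            intro u
            have harg : (2 * π * ⟪u + η₀, z - y⟫ : ℝ) =
                2 * π * ⟪u, z - y⟫ + 2 * π * ⟪η₀, z - y⟫ := by
              rw [inner_add_left]; ring
            rw [harg, Complex.ofReal_add, add_mul, Complex.exp_add]
            ring
          simp_rw [e3]
          rw [MeasureTheory.integral_mul_const]
          congr 1
          rw [Real.fourierInv_eq']
          simp_rw [smul_eq_mul]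
  -- conclude
  rw [stepB]
  calc ‖∫ y, ∫ ω, F ω y‖ ≤ ∫ y, ‖∫ ω, F ω y‖ := norm_integral_le_integral_norm _
    _ = ∫ y, ‖f y‖ * ‖𝓕⁻ (⇑ψ) (z - y)‖ := by
        congr 1
        ext y
        rw [inner_eq y, norm_mul, norm_mul, Complex.norm_exp_ofReal_mul_I, mul_one, mul_comm]

end BernsteinAux

section BernsteinMain

open SchwartzMap Complex Function
open scoped RealInnerProductSpace Real

/-- Generalized Bernstein inequality: if `|v(x)| ≤ C|x|`, `s ≥ 0`, and `f` is a
(continuous, integrable) function whose Fourier transform is supported in a ball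
`B(η₀,1)`, then `sup_x ⟨x⟩^{-s} |f(v(x))| ≲ ∫ ⟨x⟩^{-s} |f(x)| dx`, with implicit
constant depending only on `d`, `s`, `C` (in particular independent of `f`, `η₀`). -/
theorem generalized_bernstein (d : ℕ) (hd : 1 ≤ d) (C : ℝ) (hC : 0 < C) (s : ℝ) (hs : 0 ≤ s) :
    ∃ c : ℝ, 0 < c ∧
      ∀ v : EuclideanSpace ℝ (Fin d) → EuclideanSpace ℝ (Fin d),
        (∀ x, ‖v x‖ ≤ C * ‖x‖) →
        ∀ (f : EuclideanSpace ℝ (Fin d) → ℂ) (η₀ : EuclideanSpace ℝ (Fin d)),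
          Continuous f → Integrable f →
          Function.support (𝓕 f) ⊆ ball η₀ 1 →
          ∀ x : EuclideanSpace ℝ (Fin d),
            (1 + ‖x‖ ^ 2) ^ (-s / 2) * ‖f (v x)‖ ≤
              c * ∫ y : EuclideanSpace ℝ (Fin d), (1 + ‖y‖ ^ 2) ^ (-s / 2) * ‖f y‖ := by
  obtain ⟨ψ, hψ⟩ := exists_schwartz_cutoff d
  set φ : SchwartzMap (EuclideanSpace ℝ (Fin d)) ℂ := (FourierTransform.fourierCLE ℝ (SchwartzMap (EuclideanSpace ℝ (Fin d)) ℂ)).symm ψ with hφdef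
  have hφ : ⇑φ = 𝓕⁻ (⇑ψ) := by
    rw [hφdef, FourierTransform.fourierCLE_symm_apply]; exact SchwartzMap.fourierInv_coe ψ
  obtain ⟨K, hK0, hK⟩ := schwartz_poly_bound φ s hs
  refine ⟨2 ^ (s / 2) * (1 + C ^ 2) ^ (s / 2) * (K + 1), by positivity, ?_⟩
  intro v hv f η₀ hc hi hsupp x
  set c : ℝ := 2 ^ (s / 2) * (1 + C ^ 2) ^ (s / 2) * (K + 1) with hcdef
  have hc0 : 0 < c := by rw [hcdef]; positivity
  -- integrability of the weighted integrand
  have hwle : ∀ y : EuclideanSpace ℝ (Fin d), (1 + ‖y‖ ^ 2) ^ (-s / 2) ≤ 1 := by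
    intro y
    apply Real.rpow_le_one_of_one_le_of_nonpos (by nlinarith [sq_nonneg ‖y‖])
    linarith
  have hw0 : ∀ y : EuclideanSpace ℝ (Fin d), (0:ℝ) ≤ (1 + ‖y‖ ^ 2) ^ (-s / 2) := by
    intro y; positivity
  have hwint : Integrable (fun y : EuclideanSpace ℝ (Fin d) =>
      (1 + ‖y‖ ^ 2) ^ (-s / 2) * ‖f y‖) := by
    apply hi.norm.mono'
    · apply Continuous.aestronglyMeasurable
      apply Continuous.mul _ hc.norm
      exact (continuous_const.add (continuous_norm.pow 2)).rpow_const
        (fun y => Or.inl (by show (1:ℝ) + ‖y‖ ^ 2 ≠ 0; positivity))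
    · filter_upwards with y
      rw [Real.norm_eq_abs, _root_.abs_of_nonneg (by positivity)]
      calc (1 + ‖y‖ ^ 2) ^ (-s / 2) * ‖f y‖ ≤ 1 * ‖f y‖ :=
            mul_le_mul_of_nonneg_right (hwle y) (norm_nonneg _)
        _ = ‖f y‖ := one_mul _
  -- pointwise bound of the shifted kernel
  have hpoint : ∀ y : EuclideanSpace ℝ (Fin d),
      (1 + ‖x‖ ^ 2) ^ (-s / 2) * (‖f y‖ * ‖𝓕⁻ (⇑ψ) (v x - y)‖) ≤
        c * ((1 + ‖y‖ ^ 2) ^ (-s / 2) * ‖f y‖) := by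
    intro y
    set t : EuclideanSpace ℝ (Fin d) := v x - y with ht
    set A : ℝ := (1 + ‖x‖ ^ 2) ^ (s / 2) with hA
    set B : ℝ := (1 + ‖y‖ ^ 2) ^ (s / 2) with hB
    have hApos : 0 < A := by rw [hA]; positivity
    have hBpos : 0 < B := by rw [hB]; positivity
    have hXinv : (1 + ‖x‖ ^ 2 : ℝ) ^ (-s / 2) = A⁻¹ := by
      rw [hA, ← Real.rpow_neg (by positivity)]; congr 1; ring
    have hYinv : (1 + ‖y‖ ^ 2 : ℝ) ^ (-s / 2) = B⁻¹ := by
      rw [hB, ← Real.rpow_neg (by positivity)]; congr 1; ring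
    -- key : B * ‖φ t‖ ≤ c * A
    have hvx : (1 + ‖v x‖ ^ 2 : ℝ) ^ (s / 2) ≤ (1 + C ^ 2) ^ (s / 2) * A := by
      have h1 : (1 + ‖v x‖ ^ 2 : ℝ) ≤ (1 + C ^ 2) * (1 + ‖x‖ ^ 2) := by
        have h2 : ‖v x‖ ≤ C * ‖x‖ := hv x
        have h3 := norm_nonneg (v x); have h4 := norm_nonneg x
        nlinarith [sq_nonneg ‖x‖, sq_nonneg C]
      calc (1 + ‖v x‖ ^ 2 : ℝ) ^ (s / 2) ≤ ((1 + C ^ 2) * (1 + ‖x‖ ^ 2)) ^ (s / 2) :=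
            Real.rpow_le_rpow (by positivity) h1 (by positivity)
        _ = (1 + C ^ 2) ^ (s / 2) * A := by
            rw [hA, Real.mul_rpow (by positivity) (by positivity)]
    have hpeetre : B ≤ 2 ^ (s / 2) * ((1 + ‖t‖ ^ 2) ^ (s / 2) * ((1 + C ^ 2) ^ (s / 2) * A)) := by
      have h1 := peetre_aux s hs y (v x)
      have h2 : ‖y - v x‖ = ‖t‖ := by rw [ht, norm_sub_rev]
      rw [h2] at h1
      refine le_trans h1 ?_
      apply mul_le_mul_of_nonneg_left _ (by positivity)
      exact mul_le_mul_of_nonneg_left hvx (by positivity)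
    have hkey : B * ‖𝓕⁻ (⇑ψ) t‖ ≤ c * A := by
      have hKt : (1 + ‖t‖ ^ 2) ^ (s / 2) * ‖𝓕⁻ (⇑ψ) t‖ ≤ K + 1 := by
        have := hK t
        rw [hφ] at this
        linarith
      have h5 : 0 ≤ ‖𝓕⁻ (⇑ψ) t‖ := norm_nonneg _
      calc B * ‖𝓕⁻ (⇑ψ) t‖
          ≤ (2 ^ (s / 2) * ((1 + ‖t‖ ^ 2) ^ (s / 2) * ((1 + C ^ 2) ^ (s / 2) * A))) *
            ‖𝓕⁻ (⇑ψ) t‖ := mul_le_mul_of_nonneg_right hpeetre h5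
        _ = (2 ^ (s / 2) * (1 + C ^ 2) ^ (s / 2) * A) * ((1 + ‖t‖ ^ 2) ^ (s / 2) * ‖𝓕⁻ (⇑ψ) t‖) := by
            ring
        _ ≤ (2 ^ (s / 2) * (1 + C ^ 2) ^ (s / 2) * A) * (K + 1) := by
            apply mul_le_mul_of_nonneg_left hKt (by positivity)
        _ = c * A := by rw [hcdef]; ring
    have h2 : ‖𝓕⁻ (⇑ψ) t‖ ≤ c * A / B := by
      rw [le_div_iff₀ hBpos]
      calc ‖𝓕⁻ (⇑ψ) t‖ * B = B * ‖𝓕⁻ (⇑ψ) t‖ := mul_comm _ _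
        _ ≤ c * A := hkey
    rw [hXinv, hYinv]
    calc A⁻¹ * (‖f y‖ * ‖𝓕⁻ (⇑ψ) t‖) ≤ A⁻¹ * (‖f y‖ * (c * A / B)) := by
          apply mul_le_mul_of_nonneg_left
            (mul_le_mul_of_nonneg_left h2 (norm_nonneg _)) (by positivity)
      _ = c * (B⁻¹ * ‖f y‖) := by
          field_simp
  -- assemble
  calc (1 + ‖x‖ ^ 2) ^ (-s / 2) * ‖f (v x)‖
      ≤ (1 + ‖x‖ ^ 2) ^ (-s / 2) *
        ∫ y, ‖f y‖ * ‖𝓕⁻ (⇑ψ) (v x - y)‖ := by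
        apply mul_le_mul_of_nonneg_left (kernel_bound ψ hψ f η₀ hc hi hsupp (v x)) (hw0 x)
    _ = ∫ y, (1 + ‖x‖ ^ 2) ^ (-s / 2) * (‖f y‖ * ‖𝓕⁻ (⇑ψ) (v x - y)‖) :=
        (MeasureTheory.integral_const_mul _ _).symm
    _ ≤ ∫ y, c * ((1 + ‖y‖ ^ 2) ^ (-s / 2) * ‖f y‖) := by
        apply integral_mono_of_nonneg
        · filter_upwards with y
          positivity
        · exact hwint.const_mul c
        · filter_upwards with y
          exact hpoint y
    _ = c * ∫ y, (1 + ‖y‖ ^ 2) ^ (-s / 2) * ‖f y‖ := MeasureTheory.integral_const_mul _ _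

end BernsteinMain
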